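/- Let x ≥ 2, q ≥ 2, R₀ > 0, and let ρ = β + iγ be a complex number with |γ| ≥ 1 and β ≤ 1 - 1/(R₀ log(q|γ|)). Then x^{β-1}/|ρ| ≤ q·exp(-2√(log x / R₀)). -/

import Mathlib

open Real

theorem rpow_div_abs_le_exp (x q R₀ : ℝ) (ρ : ℂ)
    (hx : 2 ≤ x) (hq : 2 ≤ q) (hR₀ : 0 < R₀)
    (hγ : 1 ≤ |ρ.im|)
    (hβ : ρ.re ≤ 1 - 1 / (R₀ * Real.log (q * |ρ.im|))) :
    x ^ (ρ.re - 1) / ‖ρ‖ ≤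
      q * Real.exp (-2 * Real.sqrt (Real.log x / R₀)) := by
  set γ := |ρ.im| with hγdef
  set L := Real.log x with hL
  set T := Real.log (q * γ) with hT
  have hγ0 : (0:ℝ) < γ := by linarith
  have hq0 : (0:ℝ) < q := by linarith
  have hx0 : (0:ℝ) < x := by linarith
  have hL0 : 0 < L := Real.log_pos (by linarith)
  have hqγ : (2:ℝ) ≤ q * γ := by nlinarith
  have hT0 : 0 < T := Real.log_pos (by linarith)
  have hTsplit : T = Real.log q + Real.log γ := Real.log_mul (by positivity) (by positivity)
  have hlogγ0 : 0 ≤ Real.log γ := Real.log_nonneg hγ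
  have hρ : γ ≤ ‖ρ‖ := by
    simpa using Complex.abs_im_le_norm ρ
  -- x ^ (β - 1) = exp (L * (β - 1))
  have hrw : x ^ (ρ.re - 1) = Real.exp (L * (ρ.re - 1)) :=
    Real.rpow_def_of_pos hx0 _
  have hβ' : ρ.re - 1 ≤ -(1 / (R₀ * T)) := by linarith
  -- key AM-GM inequality: 2√(L/R₀) ≤ L/(R₀T) + T
  have hamgm : 2 * Real.sqrt (L / R₀) ≤ L / (R₀ * T) + T := by
    set a := L / (R₀ * T) with ha
    have ha0 : 0 ≤ a := by positivity
    have hab : a * T = L / R₀ := by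
      field_simp [ha]
      rw [ha]; field_simp
    have hsq : Real.sqrt (L / R₀) = Real.sqrt a * Real.sqrt T := by
      rw [← hab, Real.sqrt_mul ha0]
    rw [hsq]
    nlinarith [sq_nonneg (Real.sqrt a - Real.sqrt T), Real.sq_sqrt ha0,
      Real.sq_sqrt hT0.le, Real.sqrt_nonneg a, Real.sqrt_nonneg T]
  have hkey : L * (ρ.re - 1) - Real.log γ ≤ Real.log q + -2 * Real.sqrt (L / R₀) := by
    have h1 : L * (ρ.re - 1) ≤ -(L / (R₀ * T)) := by
      have := mul_le_mul_of_nonneg_left hβ' hL0.le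
      calc L * (ρ.re - 1) ≤ L * (-(1 / (R₀ * T))) := this
        _ = -(L / (R₀ * T)) := by ring
    nlinarith [hamgm]
  calc x ^ (ρ.re - 1) / ‖ρ‖
      ≤ Real.exp (L * (ρ.re - 1)) / γ := by
        rw [hrw]
        exact div_le_div_of_nonneg_left (Real.exp_pos _).le hγ0 hρ
    _ = Real.exp (L * (ρ.re - 1) - Real.log γ) := by
        rw [Real.exp_sub, Real.exp_log hγ0]
    _ ≤ Real.exp (Real.log q + -2 * Real.sqrt (L / R₀)) := Real.exp_le_exp.mpr hkey
    _ = q * Real.exp (-2 * Real.sqrt (L / R₀)) := by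
        rw [Real.exp_add, Real.exp_log hq0]
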